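/- Consider the system ẋ₁ = −x₁(1 − sin x₂), ẋ₂ = −x₂ + u. If ‖u‖_∞ ≤ 1/2 then along any trajectory |x₁(t)| ≤ |ξ₁| e^{|ξ₂|} e^{−t/2} for all t ≥ 0. -/

import Mathlib

/-- The vector field of the system ẋ₁ = −x₁(1 − sin x₂), ẋ₂ = −x₂ + u. -/
noncomputable def fsys (x : ℝ × ℝ) (u : ℝ) : ℝ × ℝ :=
  (-x.1 * (1 - Real.sin x.2), -x.2 + u)

open Real MeasureTheory intervalIntegral Set

private lemma hasDerivAt_fst' {x : ℝ → ℝ × ℝ} {p : ℝ × ℝ} {t : ℝ}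
    (h : HasDerivAt x p t) : HasDerivAt (fun s => (x s).1) p.1 t :=
  ((ContinuousLinearMap.fst ℝ ℝ ℝ).hasFDerivAt.comp_hasDerivAt t h)

private lemma hasDerivAt_snd' {x : ℝ → ℝ × ℝ} {p : ℝ × ℝ} {t : ℝ}
    (h : HasDerivAt x p t) : HasDerivAt (fun s => (x s).2) p.2 t :=
  ((ContinuousLinearMap.snd ℝ ℝ ℝ).hasFDerivAt.comp_hasDerivAt t h)

/-- If ‖u‖_∞ ≤ 1/2 then along any trajectory of the system,
|x₁(t)| ≤ |ξ₁| e^{|ξ₂|} e^{−t/2} for all t ≥ 0. -/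
theorem stmt10 (x : ℝ → ℝ × ℝ) (u : ℝ → ℝ) (hu : Measurable u)
    (hx : ∀ t, 0 ≤ t → HasDerivAt x (fsys (x t) (u t)) t)
    (hub : ∀ s, 0 ≤ s → |u s| ≤ 1 / 2) :
    ∀ t, 0 ≤ t →
      |(x t).1| ≤ |(x 0).1| * Real.exp |(x 0).2| * Real.exp (-t / 2) := by
  set ξ₁ := (x 0).1
  set ξ₂ := (x 0).2
  -- derivatives of the components
  have h1 : ∀ s, 0 ≤ s →
      HasDerivAt (fun σ => (x σ).1) (-(x s).1 * (1 - Real.sin (x s).2)) s :=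
    fun s hs => hasDerivAt_fst' (hx s hs)
  have h2 : ∀ s, 0 ≤ s →
      HasDerivAt (fun σ => (x σ).2) (-(x s).2 + u s) s :=
    fun s hs => hasDerivAt_snd' (hx s hs)
  -- auxiliary function w s = e^s * x₂ s
  set w : ℝ → ℝ := fun s => Real.exp s * (x s).2 with hw_def
  have hw : ∀ s, 0 ≤ s → HasDerivAt w (Real.exp s * u s) s := by
    intro s hs
    have := (Real.hasDerivAt_exp s).mul (h2 s hs)
    exact this.congr_deriv (by ring)
  -- integrability of e^s * u s
  have hui : ∀ t, 0 ≤ t → IntervalIntegrable (fun s => Real.exp s * u s) volume 0 t := by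
    intro t ht
    rw [intervalIntegrable_iff, uIoc_of_le ht]
    refine Integrable.mono' (g := fun _ => Real.exp t * (1/2))
      (integrable_const _) ((Real.continuous_exp.measurable.mul hu).aestronglyMeasurable) ?_
    rw [ae_restrict_iff' measurableSet_Ioc]
    filter_upwards with s hs
    rw [Real.norm_eq_abs, abs_mul, abs_of_pos (Real.exp_pos s)]
    have h1 := Real.exp_le_exp.2 hs.2
    have h2 := hub s hs.1.le
    have := (Real.exp_pos s).le
    nlinarith [abs_nonneg (u s)]
  -- bound on |x₂|
  have hx2 : ∀ s, 0 ≤ s → |(x s).2| ≤ |ξ₂| * Real.exp (-s) + 1/2 := by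
    intro s hs
    have heq : ∫ σ in (0:ℝ)..s, Real.exp σ * u σ = w s - w 0 := by
      refine integral_eq_sub_of_hasDerivAt (fun σ hσ => ?_) (hui s hs)
      rw [uIcc_of_le hs] at hσ
      exact hw σ hσ.1
    have hIb : |∫ σ in (0:ℝ)..s, Real.exp σ * u σ| ≤ (Real.exp s - 1) / 2 := by
      calc |∫ σ in (0:ℝ)..s, Real.exp σ * u σ|
          ≤ ∫ σ in (0:ℝ)..s, |Real.exp σ * u σ| :=
            intervalIntegral.abs_integral_le_integral_abs hs
        _ ≤ ∫ σ in (0:ℝ)..s, Real.exp σ / 2 := by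
            refine intervalIntegral.integral_mono_on hs ((hui s hs).abs)
              (Continuous.intervalIntegrable (by continuity) _ _) (fun σ hσ => ?_)
            rw [abs_mul, abs_of_pos (Real.exp_pos σ)]
            have := hub σ hσ.1
            have := (Real.exp_pos σ).le
            nlinarith [abs_nonneg (u σ)]
        _ = (Real.exp s - 1) / 2 := by
            rw [intervalIntegral.integral_div, integral_exp, Real.exp_zero]
    have hw0 : w 0 = ξ₂ := by simp [hw_def, ξ₂]
    have hws : |w s| ≤ |ξ₂| + (Real.exp s - 1) / 2 := by
      have : w s = ξ₂ + (w s - w 0) := by rw [hw0]; ring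
      rw [this, ← heq]
      exact (abs_add_le _ _).trans (by gcongr)
    have hxw : (x s).2 = Real.exp (-s) * w s := by
      rw [hw_def]
      simp only
      rw [← mul_assoc, ← Real.exp_add]
      simp
    rw [hxw, abs_mul, abs_of_pos (Real.exp_pos (-s))]
    have he : Real.exp (-s) * Real.exp s = 1 := by
      rw [← Real.exp_add]; simp
    have h1 : Real.exp (-s) ≤ 1 := Real.exp_le_one_iff.2 (by linarith)
    nlinarith [Real.exp_pos (-s), abs_nonneg (w s)]
  -- the integrand of the exponent
  set f : ℝ → ℝ := fun σ => 1 - Real.sin (x σ).2 with hf_def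
  have hcf : ∀ σ, 0 ≤ σ → ContinuousAt f σ := by
    intro σ hσ
    exact continuousAt_const.sub (Real.continuous_sin.continuousAt.comp
      ((hx σ hσ).continuousAt.snd))
  have hcfOn : ContinuousOn f (Ici 0) :=
    fun σ hσ => (hcf σ hσ).continuousWithinAt
  have hfint : ∀ a b : ℝ, 0 ≤ a → 0 ≤ b → IntervalIntegrable f volume a b := by
    intro a b ha hb
    refine (hcfOn.mono ?_).intervalIntegrable
    exact fun σ hσ => le_trans (le_min ha hb) hσ.1
  -- the primitive
  set I : ℝ → ℝ := fun r => ∫ σ in (0:ℝ)..r, f σ with hI_def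
  have hmeasf : ∀ r : ℝ, 0 ≤ r →
      StronglyMeasurableAtFilter f (nhdsWithin r (Ioi r)) volume := by
    intro r hr
    refine ⟨Ici 0, ?_, hcfOn.aestronglyMeasurable measurableSet_Ici⟩
    exact Filter.mem_of_superset self_mem_nhdsWithin (fun y hy => le_trans hr hy.le)
  have hIderiv : ∀ r, 0 ≤ r → HasDerivWithinAt I (f r) (Ici r) r := by
    intro r hr
    exact intervalIntegral.integral_hasDerivWithinAt_right (t := Ioi r)
      (hfint 0 r le_rfl hr) (hmeasf r hr) ((hcf r hr).continuousWithinAt)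
  -- the conserved quantity F r = x₁ r * exp (I r)
  set F : ℝ → ℝ := fun r => (x r).1 * Real.exp (I r) with hF_def
  intro t ht
  have hFderiv : ∀ r ∈ Ico 0 t, HasDerivWithinAt F 0 (Ici r) r := by
    intro r hr
    have hdE : HasDerivWithinAt (fun ρ => Real.exp (I ρ)) (Real.exp (I r) * f r)
        (Ici r) r := (hIderiv r hr.1).exp
    have := ((h1 r hr.1).hasDerivWithinAt).mul hdE
    exact this.congr_deriv (by rw [hf_def]; ring)
  have hFcont : ContinuousOn F (Icc 0 t) := by
    have hcx1 : ContinuousOn (fun r => (x r).1) (Icc 0 t) :=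
      fun r hr => ((hx r hr.1).continuousAt.fst).continuousWithinAt
    have hIcont : ContinuousOn I (Icc 0 t) := by
      have hint : IntegrableOn f (uIcc 0 t) volume := by
        rw [uIcc_of_le ht, ← intervalIntegrable_iff_integrableOn_Icc_of_le ht]
        exact hfint 0 t le_rfl ht
      have := intervalIntegral.continuousOn_primitive_interval hint
      rwa [uIcc_of_le ht] at this
    exact hcx1.mul (Real.continuous_exp.comp_continuousOn hIcont)
  have hFt : F t = F 0 :=
    constant_of_has_deriv_right_zero hFcont hFderiv t ⟨ht, le_rfl⟩
  have hF0 : F 0 = ξ₁ := by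
    simp [hF_def, hI_def, intervalIntegral.integral_same, ξ₁]
  have hx1t : (x t).1 = ξ₁ * Real.exp (-(I t)) := by
    have h := hFt.trans hF0
    rw [hF_def] at h
    rw [Real.exp_neg]
    field_simp at h ⊢
    linarith [h]
  -- lower bound on I t
  have hlow : ∀ σ ∈ Icc (0:ℝ) t, 1/2 - |ξ₂| * Real.exp (-σ) ≤ f σ := by
    intro σ hσ
    have h := hx2 σ hσ.1
    have hsin : |Real.sin (x σ).2| ≤ |(x σ).2| := Real.abs_sin_le_abs
    have := le_abs_self (Real.sin (x σ).2)
    rw [hf_def]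
    simp only
    linarith
  have hglow : IntervalIntegrable (fun σ => 1/2 - |ξ₂| * Real.exp (-σ)) volume 0 t :=
    ((continuous_const.sub (continuous_const.mul
      (Real.continuous_exp.comp continuous_neg))).intervalIntegrable _ _)
  have hgint : ∫ σ in (0:ℝ)..t, (1/2 - |ξ₂| * Real.exp (-σ))
      = (t/2 + |ξ₂| * Real.exp (-t)) - (0/2 + |ξ₂| * Real.exp (-0)) := by
    refine integral_eq_sub_of_hasDerivAt
      (f := fun σ => σ/2 + |ξ₂| * Real.exp (-σ)) (fun σ _ => ?_) hglow
    have hde : HasDerivAt (fun σ : ℝ => Real.exp (-σ)) (Real.exp (-σ) * (-1)) σ :=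
      (hasDerivAt_neg σ).exp
    have := ((hasDerivAt_id σ).div_const 2).add ((hde.const_mul |ξ₂|))
    exact this.congr_deriv (by ring)
  have hIlow : t/2 - |ξ₂| ≤ I t := by
    have hmono := intervalIntegral.integral_mono_on ht hglow (hfint 0 t le_rfl ht) hlow
    rw [hgint] at hmono
    have h1 : (0:ℝ) ≤ |ξ₂| * Real.exp (-t) := by positivity
    have h2 : Real.exp (-(0:ℝ)) = 1 := by simp
    rw [h2] at hmono
    rw [hI_def]
    linarith
  -- conclude
  rw [hx1t, abs_mul, abs_of_pos (Real.exp_pos _)]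
  have : Real.exp (-(I t)) ≤ Real.exp |ξ₂| * Real.exp (-t/2) := by
    rw [← Real.exp_add]
    apply Real.exp_le_exp.2
    linarith
  calc |ξ₁| * Real.exp (-(I t)) ≤ |ξ₁| * (Real.exp |ξ₂| * Real.exp (-t/2)) := by
        exact mul_le_mul_of_nonneg_left this (abs_nonneg _)
    _ = |ξ₁| * Real.exp |ξ₂| * Real.exp (-t/2) := by ring
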